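/- Let t ≥ 1 be a real number. There exists a constant C > 0 depending only on t such that for every u > 0 and every v ∈ ℝ one has | |u + v|^t·(u + v) − u^{t+1} − (1 + t)·u^t·v | ≤ C · ( u^{t−1}·v² + |v|^{t+1} ). -/
import Mathlib
set_option maxHeartbeats 1000000

lemma rpow_sub_rpow_aux (t : ℝ) (ht : 1 ≤ t) (u : ℝ) (hu : 0 < u)
    (w : ℝ) (h1 : u / 2 ≤ w) (h2 : w ≤ 3 * u / 2) :
    |w ^ t - u ^ t| ≤ t * ((3 / 2 : ℝ) ^ (t - 1) * u ^ (t - 1)) * |w - u| := by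
  have hderiv : ∀ x ∈ Set.Icc (u / 2) (3 * u / 2),
      HasDerivWithinAt (fun x : ℝ => x ^ t) (t * x ^ (t - 1)) (Set.Icc (u / 2) (3 * u / 2)) x :=
    fun x _ => (Real.hasDerivAt_rpow_const (Or.inr ht)).hasDerivWithinAt
  have hbound : ∀ x ∈ Set.Icc (u / 2) (3 * u / 2),
      ‖t * x ^ (t - 1)‖ ≤ t * ((3 / 2 : ℝ) ^ (t - 1) * u ^ (t - 1)) := by
    intro x hx
    have hx0 : 0 < x := lt_of_lt_of_le (by linarith) hx.1
    have hle : x ^ (t - 1) ≤ (3 / 2 * u) ^ (t - 1) :=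
      Real.rpow_le_rpow hx0.le (by linarith [hx.2]) (by linarith)
    rw [Real.mul_rpow (by norm_num) hu.le] at hle
    rw [norm_mul, Real.norm_eq_abs, Real.norm_eq_abs,
      abs_of_nonneg (by linarith : (0 : ℝ) ≤ t),
      abs_of_nonneg (Real.rpow_nonneg hx0.le _)]
    exact mul_le_mul_of_nonneg_left hle (by linarith)
  have := Convex.norm_image_sub_le_of_norm_hasDerivWithin_le (x := u) (y := w) hderiv hbound
    (convex_Icc _ _) (Set.mem_Icc.mpr ⟨by linarith, by linarith⟩) (Set.mem_Icc.mpr ⟨h1, h2⟩)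
  simpa [Real.norm_eq_abs] using this

theorem stmt10 (t : ℝ) (ht : 1 ≤ t) :
    ∃ C > 0, ∀ u : ℝ, 0 < u → ∀ v : ℝ,
      |(|u + v|) ^ t * (u + v) - u ^ (t + 1) - (1 + t) * u ^ t * v| ≤
        C * (u ^ (t - 1) * v ^ 2 + |v| ^ (t + 1)) := by
  have ht0 : (0 : ℝ) < t := by linarith
  have ht1 : (0 : ℝ) < t + 1 := by linarith
  set d : ℝ := (t + 1) * (t * (3 / 2 : ℝ) ^ (t - 1)) with hd
  have hd0 : 0 < d := by
    have : (0 : ℝ) < (3 / 2 : ℝ) ^ (t - 1) := Real.rpow_pos_of_pos (by norm_num) _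
    positivity
  set C : ℝ := (3 : ℝ) ^ (t + 1) + (2 : ℝ) ^ (t + 1) + (1 + t) * (2 : ℝ) ^ t + d with hC
  have h3p : (0 : ℝ) < (3 : ℝ) ^ (t + 1) := Real.rpow_pos_of_pos (by norm_num) _
  have h2p : (0 : ℝ) < (2 : ℝ) ^ (t + 1) := Real.rpow_pos_of_pos (by norm_num) _
  have h2t : (0 : ℝ) < (2 : ℝ) ^ t := Real.rpow_pos_of_pos (by norm_num) _
  have hC0 : 0 < C := by rw [hC]; nlinarith
  refine ⟨C, hC0, ?_⟩
  intro u hu v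
  have hA : 0 ≤ u ^ (t - 1) * v ^ 2 := by positivity
  have hB : 0 ≤ |v| ^ (t + 1) := Real.rpow_nonneg (abs_nonneg v) _
  rcases le_or_gt (|v|) (u / 2) with hv | hv
  · -- Taylor case
    have hnv : -|v| ≤ v := neg_abs_le v
    have hpv : v ≤ |v| := le_abs_self v
    have huv : 0 < u + v := by linarith
    have hsub : Set.uIcc u (u + v) ⊆ Set.Icc (u / 2) (3 * u / 2) := by
      intro x hx
      rw [Set.mem_uIcc] at hx
      rcases hx with ⟨a, b⟩ | ⟨a, b⟩ <;> exact Set.mem_Icc.mpr ⟨by linarith, by linarith⟩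
    have hg : ∀ x ∈ Set.uIcc u (u + v), HasDerivWithinAt
        (fun w => w ^ (t + 1) - u ^ (t + 1) - (1 + t) * u ^ t * (w - u))
        ((t + 1) * x ^ t - (1 + t) * u ^ t) (Set.uIcc u (u + v)) x := by
      intro x _
      have h1 : HasDerivAt (fun w : ℝ => w ^ (t + 1)) ((t + 1) * x ^ t) x := by
        have := Real.hasDerivAt_rpow_const (p := t + 1) (x := x) (Or.inr (by linarith))
        simpa using this
      have h2 : HasDerivAt (fun w : ℝ => (1 + t) * u ^ t * (w - u)) ((1 + t) * u ^ t) x := by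
        simpa using ((hasDerivAt_id x).sub_const u).const_mul ((1 + t) * u ^ t)
      exact ((h1.sub_const _).sub h2).hasDerivWithinAt
    have hbd : ∀ x ∈ Set.uIcc u (u + v),
        ‖(t + 1) * x ^ t - (1 + t) * u ^ t‖ ≤ d * u ^ (t - 1) * |v| := by
      intro x hx
      have hxI := hsub hx
      rw [Set.mem_Icc] at hxI
      have hxu : |x - u| ≤ |v| := by
        rw [Set.mem_uIcc] at hx
        rcases hx with ⟨a, b⟩ | ⟨a, b⟩ <;> exact abs_le.mpr ⟨by linarith, by linarith⟩
      have key := rpow_sub_rpow_aux t ht u hu x hxI.1 hxI.2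
      have hpos : (0 : ℝ) ≤ t * ((3 / 2 : ℝ) ^ (t - 1) * u ^ (t - 1)) := by
        have : (0 : ℝ) < (3 / 2 : ℝ) ^ (t - 1) := Real.rpow_pos_of_pos (by norm_num) _
        have : (0 : ℝ) < u ^ (t - 1) := Real.rpow_pos_of_pos hu _
        positivity
      calc ‖(t + 1) * x ^ t - (1 + t) * u ^ t‖ = (t + 1) * |x ^ t - u ^ t| := by
            rw [show (t + 1) * x ^ t - (1 + t) * u ^ t = (t + 1) * (x ^ t - u ^ t) by ring,
              Real.norm_eq_abs, abs_mul, abs_of_nonneg (by linarith : (0 : ℝ) ≤ t + 1)]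
        _ ≤ (t + 1) * (t * ((3 / 2 : ℝ) ^ (t - 1) * u ^ (t - 1)) * |v|) := by
            refine mul_le_mul_of_nonneg_left ?_ (by linarith)
            exact key.trans (mul_le_mul_of_nonneg_left hxu hpos)
        _ = d * u ^ (t - 1) * |v| := by rw [hd]; ring
    have hmv := Convex.norm_image_sub_le_of_norm_hasDerivWithin_le hg hbd
      (convex_uIcc _ _) Set.left_mem_uIcc Set.right_mem_uIcc
    simp only [Real.norm_eq_abs] at hmv
    have hzero : u ^ (t + 1) - u ^ (t + 1) - (1 + t) * u ^ t * (u - u) = 0 := by ring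
    rw [hzero, sub_zero, add_sub_cancel_left] at hmv
    have heq : (|u + v|) ^ t * (u + v) - u ^ (t + 1) - (1 + t) * u ^ t * v =
        (u + v) ^ (t + 1) - u ^ (t + 1) - (1 + t) * u ^ t * v := by
      rw [abs_of_pos huv, Real.rpow_add_one huv.ne']
    rw [heq]
    calc |(u + v) ^ (t + 1) - u ^ (t + 1) - (1 + t) * u ^ t * v| ≤
          d * u ^ (t - 1) * |v| * |v| := hmv
      _ = d * (u ^ (t - 1) * v ^ 2) := by rw [mul_assoc, abs_mul_abs_self]; ring
      _ ≤ C * (u ^ (t - 1) * v ^ 2 + |v| ^ (t + 1)) := by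
          have hdC : d ≤ C := by rw [hC]; nlinarith
          nlinarith [mul_le_mul_of_nonneg_right hdC hA, mul_nonneg hC0.le hB]
  · -- crude case
    have hv2 : u < 2 * |v| := by linarith
    have hvpos : 0 < |v| := by linarith
    have h3 : |u + v| ≤ 3 * |v| := (abs_add_le u v).trans (by rw [abs_of_pos hu]; linarith)
    have e1 : |(|u + v|) ^ t * (u + v)| = |u + v| ^ (t + 1) := by
      rcases eq_or_ne (u + v) 0 with h | h
      · rw [h]
        simp [Real.zero_rpow (by linarith : t + 1 ≠ 0)]
      · rw [abs_mul, abs_of_nonneg (Real.rpow_nonneg (abs_nonneg _) t),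
          Real.rpow_add_one (abs_ne_zero.mpr h)]
    have b1 : |u + v| ^ (t + 1) ≤ (3 : ℝ) ^ (t + 1) * |v| ^ (t + 1) := by
      rw [← Real.mul_rpow (by norm_num) (abs_nonneg v)]
      exact Real.rpow_le_rpow (abs_nonneg _) h3 (by linarith)
    have b2 : u ^ (t + 1) ≤ (2 : ℝ) ^ (t + 1) * |v| ^ (t + 1) := by
      rw [← Real.mul_rpow (by norm_num) (abs_nonneg v)]
      exact Real.rpow_le_rpow hu.le hv2.le (by linarith)
    have b3 : u ^ t ≤ (2 : ℝ) ^ t * |v| ^ t := by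
      rw [← Real.mul_rpow (by norm_num) (abs_nonneg v)]
      exact Real.rpow_le_rpow hu.le hv2.le (by linarith)
    have hvt : |v| ^ t * |v| = |v| ^ (t + 1) := by
      rw [Real.rpow_add_one hvpos.ne']
    have hut : 0 ≤ u ^ t := Real.rpow_nonneg hu.le _
    have huT : 0 ≤ u ^ (t + 1) := Real.rpow_nonneg hu.le _
    have tri : |(|u + v|) ^ t * (u + v) - u ^ (t + 1) - (1 + t) * u ^ t * v| ≤
        |u + v| ^ (t + 1) + u ^ (t + 1) + (1 + t) * u ^ t * |v| := by
      have t1 : |(|u + v|) ^ t * (u + v) - u ^ (t + 1) - (1 + t) * u ^ t * v| ≤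
          |(|u + v|) ^ t * (u + v)| + |u ^ (t + 1)| + |(1 + t) * u ^ t * v| := by
        calc |(|u + v|) ^ t * (u + v) - u ^ (t + 1) - (1 + t) * u ^ t * v|
            ≤ |(|u + v|) ^ t * (u + v) - u ^ (t + 1)| + |(1 + t) * u ^ t * v| := abs_sub _ _
          _ ≤ |(|u + v|) ^ t * (u + v)| + |u ^ (t + 1)| + |(1 + t) * u ^ t * v| := by
              have := abs_sub ((|u + v|) ^ t * (u + v)) (u ^ (t + 1))
              linarith
      rw [e1, abs_of_nonneg huT, abs_mul, abs_of_nonneg (by positivity : (0:ℝ) ≤ (1 + t) * u ^ t)] at t1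
      exact t1
    have b3' : (1 + t) * u ^ t * |v| ≤ (1 + t) * (2 : ℝ) ^ t * |v| ^ (t + 1) := by
      have := mul_le_mul_of_nonneg_right b3 hvpos.le
      calc (1 + t) * u ^ t * |v| ≤ (1 + t) * ((2 : ℝ) ^ t * |v| ^ t * |v|) := by nlinarith
        _ = (1 + t) * (2 : ℝ) ^ t * (|v| ^ t * |v|) := by ring
        _ = (1 + t) * (2 : ℝ) ^ t * |v| ^ (t + 1) := by rw [hvt]
    have hdB : 0 ≤ d * (u ^ (t - 1) * v ^ 2 + |v| ^ (t + 1)) := by positivity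
    calc |(|u + v|) ^ t * (u + v) - u ^ (t + 1) - (1 + t) * u ^ t * v|
        ≤ |u + v| ^ (t + 1) + u ^ (t + 1) + (1 + t) * u ^ t * |v| := tri
      _ ≤ (3 : ℝ) ^ (t + 1) * |v| ^ (t + 1) + (2 : ℝ) ^ (t + 1) * |v| ^ (t + 1) +
            (1 + t) * (2 : ℝ) ^ t * |v| ^ (t + 1) := by linarith [b3']
      _ = ((3 : ℝ) ^ (t + 1) + (2 : ℝ) ^ (t + 1) + (1 + t) * (2 : ℝ) ^ t) * |v| ^ (t + 1) := by
          ring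
      _ ≤ C * (u ^ (t - 1) * v ^ 2 + |v| ^ (t + 1)) := by
          have hS : (0:ℝ) ≤ (3 : ℝ) ^ (t + 1) + (2 : ℝ) ^ (t + 1) + (1 + t) * (2 : ℝ) ^ t := by
            positivity
          rw [hC]
          nlinarith [mul_nonneg hS hA, mul_nonneg hd0.le hA, mul_nonneg hd0.le hB]
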